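/- Additivity of the difference operator: let f be an intertwiner-preserving function on block matrices over B(H). Suppose A := [[z, u₁+u₂],[0,w]], B := [[z,0,u₁],[0,z,u₂],[0,0,w]], and C := [[z,0,u₂],[0,z,u₁],[0,0,w]] all lie in the domain. Then, using that C = S·B·S for the 3×3 permutation matrix S of the transposition (1,2), and that D·B = A·D for D := [[I,I,0],[0,0,I]], one concludes Δf(z,w)(u₁+u₂) = Δf(z,w)(u₁) + Δf(z,w)(u₂). -/

import Mathlib

variable {A : Type*} [NormedRing A] [NormedAlgebra ℂ A]

/-- A block-scalar rectangular matrix: a scalar matrix amplified into the algebra `A`. -/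
noncomputable def blkScalar {m n : ℕ} (A : Type*) [NormedRing A] [NormedAlgebra ℂ A]
    (s : Matrix (Fin m) (Fin n) ℂ) : Matrix (Fin m) (Fin n) A :=
  s.map (algebraMap ℂ A)

/-- Additivity of the Taylor difference operator (Lemma 5.7 of the paper, argument of
Kaliuzhnyi-Verbovetskyi–Vinnikov): if the family `f` preserves all block-scalar
intertwiners, then the (1,2)-corner of `f₂([[z,u],[0,w]])` is additive in `u`. -/
theorem stmt7
    (f : ∀ n : ℕ, Matrix (Fin n) (Fin n) A → Matrix (Fin n) (Fin n) A)
    (hf : ∀ (m n : ℕ) (s : Matrix (Fin m) (Fin n) ℂ)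
        (X : Matrix (Fin n) (Fin n) A) (Y : Matrix (Fin m) (Fin m) A),
      blkScalar A s * X = Y * blkScalar A s →
      blkScalar A s * f n X = f m Y * blkScalar A s)
    (z w u₁ u₂ : A) :
    (f 2 !![z, u₁ + u₂; 0, w]) 0 1 =
      (f 2 !![z, u₁; 0, w]) 0 1 + (f 2 !![z, u₂; 0, w]) 0 1 := by
  set B : Matrix (Fin 3) (Fin 3) A := !![z, 0, u₁; 0, z, u₂; 0, 0, w] with hB
  -- first intertwiner: picks out the (1,3) block
  have h1 := hf 2 3 !![1, 0, 0; 0, 0, 1] B !![z, u₁; 0, w] (by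
    ext i j
    fin_cases i <;> fin_cases j <;>
      simp [blkScalar, Matrix.mul_apply, Fin.sum_univ_succ, hB])
  -- second intertwiner: picks out the (2,3) block
  have h2 := hf 2 3 !![0, 1, 0; 0, 0, 1] B !![z, u₂; 0, w] (by
    ext i j
    fin_cases i <;> fin_cases j <;>
      simp [blkScalar, Matrix.mul_apply, Fin.sum_univ_succ, hB])
  -- third intertwiner: D = [[1,1,0],[0,0,1]]
  have h3 := hf 2 3 !![1, 1, 0; 0, 0, 1] B !![z, u₁ + u₂; 0, w] (by
    ext i j
    fin_cases i <;> fin_cases j <;>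
      simp [blkScalar, Matrix.mul_apply, Fin.sum_univ_succ, hB])
  have e1 := congrArg (fun M => M 0 2) h1
  have e2 := congrArg (fun M => M 0 2) h2
  have e3 := congrArg (fun M => M 0 2) h3
  simp [blkScalar, Matrix.mul_apply, Fin.sum_univ_succ] at e1 e2 e3
  rw [← e3, e1, e2]
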